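/- (Generalized Walsh theorem, part 1) Let D ⊆ ℂ be a circular domain, let q be a monic complex polynomial of degree d ≥ 1, and let f be a complex polynomial of degree exactly n ≥ 1 all of whose zeros lie in q_∘(D). Then every zero of T_{q,n}(f) lies in q(D), and whenever (u₁,…,uₙ) ∈ ℂⁿ satisfies S_{q,n}(f)(u₁,…,uₙ) = 0, there exists k ∈ {1,…,n} with uₖ ∈ q(D). -/

import Mathlib

open Polynomial

/-- The apolarity form `[f,g]_m`. -/
noncomputable def apol (m : ℕ) (f g : Polynomial ℂ) : ℂ :=
  ∑ k ∈ Finset.range (m + 1),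
    (-1 : ℂ) ^ k * ((m.choose k : ℂ))⁻¹ * f.coeff k * g.coeff (m - k)

/-- The symmetrization `Sym_N(f)` of a polynomial, as a function on `ι → ℂ`
with `N = card ι`. -/
noncomputable def symFun {ι : Type*} [Fintype ι] (f : Polynomial ℂ) (y : ι → ℂ) : ℂ :=
  ∑ k ∈ Finset.range (Fintype.card ι + 1),
    (((Fintype.card ι).choose k : ℂ))⁻¹ * f.coeff k *
      MvPolynomial.eval y (MvPolynomial.esymm ι ℂ k)

/-- A circular domain: an open or closed disk or half-plane, or a complement thereof. -/
def IsCircularDomain (D : Set ℂ) : Prop :=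
  ∃ (α γ : ℝ) (β : ℂ),
    D = {z : ℂ | α * Complex.normSq z + ((starRingEnd ℂ) β * z).re + γ < 0} ∨
    D = {z : ℂ | α * Complex.normSq z + ((starRingEnd ℂ) β * z).re + γ ≤ 0}

/-- `q_∘(D) = {u : q⁻¹(u) ⊆ D}`. -/
def innerImage (q : Polynomial ℂ) (D : Set ℂ) : Set ℂ :=
  {u : ℂ | ∀ z : ℂ, q.eval z = u → z ∈ D}

/-- `S_{q,n}(f)(u₁,…,uₙ) = [f∘q, ∏ⱼ (q - uⱼ)]_{nd}`. -/
noncomputable def Sfun (q : Polynomial ℂ) (n : ℕ) (f : Polynomial ℂ) (u : Fin n → ℂ) : ℂ :=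
  apol (n * q.natDegree) (f.comp q) (∏ j, (q - Polynomial.C (u j)))

/-- The Fischer inner product `⟨f,g⟩_n`. -/
noncomputable def fischer (n : ℕ) (f g : Polynomial ℂ) : ℂ :=
  ∑ k ∈ Finset.range (n + 1),
    ((n.choose k : ℂ))⁻¹ * f.coeff k * (starRingEnd ℂ) (g.coeff k)

section WalshProof

def phi (α γ : ℝ) (β : ℂ) (z : ℂ) : ℝ :=
  α * Complex.normSq z + ((starRingEnd ℂ) β * z).re + γ

/-- polar derivative -/
noncomputable def polder (m : ℕ) (w : ℂ) (P : Polynomial ℂ) : Polynomial ℂ :=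
  (m : ℂ) • P + (C w - X) * derivative P

lemma polder_coeff (m : ℕ) (w : ℂ) (P : Polynomial ℂ) (j : ℕ) :
    (polder m w P).coeff j
      = ((m : ℂ) - j) * P.coeff j + w * (j + 1) * P.coeff (j + 1) := by
  have hXP : (X * derivative P).coeff j = (j : ℂ) * P.coeff j := by
    cases j with
    | zero => simp
    | succ i =>
        rw [coeff_X_mul, coeff_derivative]
        push_cast; ring
  simp only [polder, coeff_add, coeff_smul, sub_mul, coeff_sub, coeff_C_mul,
    coeff_derivative, hXP, smul_eq_mul]
  push_cast; ring

lemma polder_natDegree_le (m : ℕ) (w : ℂ) (P : Polynomial ℂ) (hP : P.natDegree ≤ m) :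
    (polder m w P).natDegree ≤ m - 1 := by
  rw [natDegree_le_iff_coeff_eq_zero]
  intro j hj
  have h1 : P.coeff (j+1) = 0 := by
    apply coeff_eq_zero_of_natDegree_lt; omega
  rcases Nat.lt_or_ge m j with h | h
  · have : P.coeff j = 0 := by apply coeff_eq_zero_of_natDegree_lt; omega
    rw [polder_coeff, this, h1]; ring
  · have hjm : j = m := by omega
    subst hjm
    rw [polder_coeff, h1]
    simp


lemma apol_step (m : ℕ) (hm : 1 ≤ m) (P R : Polynomial ℂ)
    (hR : R.natDegree ≤ m - 1) (w : ℂ) :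
    apol (m - 1) (polder m w P) R = (m : ℂ) * apol m P ((X - C w) * R) := by
  have hm1 : m - 1 + 1 = m := by omega
  -- RHS expansion
  have hQc : ∀ j, ((X - C w) * R).coeff j = (X * R).coeff j - w * R.coeff j := by
    intro j
    rw [sub_mul, coeff_sub, coeff_C_mul]
  unfold apol
  rw [hm1]
  have hsplit : ∀ k ∈ Finset.range (m+1),
      (-1:ℂ)^k * ((m.choose k : ℂ))⁻¹ * P.coeff k * ((X - C w) * R).coeff (m - k)
      = (-1:ℂ)^k * ((m.choose k : ℂ))⁻¹ * P.coeff k * (X * R).coeff (m - k)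
        - (-1:ℂ)^k * ((m.choose k : ℂ))⁻¹ * P.coeff k * (w * R.coeff (m - k)) := by
    intro k _
    rw [hQc]; ring
  rw [Finset.sum_congr rfl hsplit, Finset.sum_sub_distrib, mul_sub]
  -- first sum
  have hS1 : (m:ℂ) * ∑ k ∈ Finset.range (m+1),
      (-1:ℂ)^k * ((m.choose k : ℂ))⁻¹ * P.coeff k * (X * R).coeff (m - k)
      = ∑ k ∈ Finset.range m,
        (-1:ℂ)^k * (((m-1).choose k : ℂ))⁻¹ * (((m:ℂ) - k) * P.coeff k) * R.coeff (m - 1 - k) := by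
    rw [Finset.sum_range_succ]
    have h0 : (X * R).coeff (m - m) = 0 := by
      simp [Nat.sub_self, mul_coeff_zero]
    rw [h0, mul_zero, add_zero, Finset.mul_sum]
    apply Finset.sum_congr rfl
    intro k hk
    rw [Finset.mem_range] at hk
    have hmk : m - k = (m - 1 - k) + 1 := by omega
    rw [hmk, coeff_X_mul]
    -- coefficient identity : m / C(m,k) = (m - k)/C(m-1,k)
    have hnat : (m - k) * m.choose k = m * (m-1).choose k := by
      have h1 : m * (m-1).choose k = m.choose (k+1) * (k+1) := by
        have := Nat.add_one_mul_choose_eq (m-1) k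
        rwa [hm1] at this
      have h2 : m.choose (k+1) * (k+1) = m.choose k * (m - k) := Nat.choose_succ_right_eq m k
      rw [h1, h2, mul_comm]
    have hc1 : (m.choose k : ℂ) ≠ 0 := by
      exact_mod_cast Nat.cast_ne_zero.mpr (Nat.choose_pos (by omega)).ne'
    have hc2 : (((m-1).choose k : ℂ)) ≠ 0 := by
      exact_mod_cast Nat.cast_ne_zero.mpr (Nat.choose_pos (by omega)).ne'
    have hcast : ((m:ℂ) - k) * (m.choose k : ℂ) = (m : ℂ) * ((m-1).choose k : ℂ) := by
      have : ((m - k : ℕ) : ℂ) * ((m.choose k : ℕ) : ℂ) = ((m : ℕ) : ℂ) * (((m-1).choose k : ℕ) : ℂ) := by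
        exact_mod_cast congrArg (Nat.cast : ℕ → ℂ) hnat
      rwa [Nat.cast_sub (by omega)] at this
    field_simp
    linear_combination (-(1:ℂ) * P.coeff k * R.coeff (m-1-k)) * hcast
  -- second sum
  have hS2 : (m:ℂ) * ∑ k ∈ Finset.range (m+1),
      (-1:ℂ)^k * ((m.choose k : ℂ))⁻¹ * P.coeff k * (w * R.coeff (m - k))
      = - ∑ k ∈ Finset.range m,
        (-1:ℂ)^k * (((m-1).choose k : ℂ))⁻¹ * (w * (k+1) * P.coeff (k+1)) * R.coeff (m - 1 - k) := by
    rw [Finset.sum_range_succ']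
    have h0 : R.coeff (m - 0) = 0 := by
      apply coeff_eq_zero_of_natDegree_lt; omega
    rw [h0]
    simp only [mul_zero, add_zero, pow_zero, one_mul, Nat.sub_zero]
    rw [Finset.mul_sum, ← Finset.sum_neg_distrib]
    apply Finset.sum_congr rfl
    intro k hk
    rw [Finset.mem_range] at hk
    have hmk : m - (k+1) = m - 1 - k := by omega
    rw [hmk]
    have hnat : m * (m-1).choose k = m.choose (k+1) * (k+1) := by
      have := Nat.add_one_mul_choose_eq (m-1) k
      rwa [hm1] at this
    have hc1 : ((m.choose (k+1) : ℕ) : ℂ) ≠ 0 := by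
      exact_mod_cast Nat.cast_ne_zero.mpr (Nat.choose_pos (by omega)).ne'
    have hc2 : (((m-1).choose k : ℕ) : ℂ) ≠ 0 := by
      exact_mod_cast Nat.cast_ne_zero.mpr (Nat.choose_pos (by omega)).ne'
    have hcast : (m:ℂ) * (((m-1).choose k : ℕ) : ℂ) = ((m.choose (k+1) : ℕ) : ℂ) * ((k:ℂ)+1) := by
      exact_mod_cast congrArg (Nat.cast : ℕ → ℂ) hnat
    field_simp
    ring_nf
    ring_nf at hcast
    simp only [Nat.add_comm 1 k] at hcast ⊢
    linear_combination (-(1:ℂ)*(-1:ℂ)^k * w * P.coeff (k+1) * R.coeff (m-1-k)) * hcast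
  rw [hS1, hS2, sub_neg_eq_add, ← Finset.sum_add_distrib]
  apply Finset.sum_congr rfl
  intro k hk
  rw [polder_coeff]
  ring


lemma normSq_sum_le (T : Multiset ℂ) :
    Complex.normSq T.sum ≤ (Multiset.card T : ℝ) * ((T.map Complex.normSq).sum) := by
  induction T using Multiset.induction with
  | empty => simp
  | cons a t ih =>
      rw [Multiset.sum_cons, Multiset.map_cons, Multiset.sum_cons, Multiset.card_cons]
      rcases eq_or_ne t 0 with rfl | ht
      · simp
      · have hk : (1:ℝ) ≤ (Multiset.card t : ℝ) := by
          have : 1 ≤ Multiset.card t := by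
            rwa [Nat.one_le_iff_ne_zero, Ne, Multiset.card_eq_zero]
          exact_mod_cast this
        set k : ℝ := (Multiset.card t : ℝ)
        set Q : ℝ := (t.map Complex.normSq).sum
        have habs : Complex.normSq (a + t.sum) ≤ (‖a‖ + ‖t.sum‖)^2 := by
          rw [← Complex.sq_norm]
          have h1 : ‖a + t.sum‖ ≤ ‖a‖ + ‖t.sum‖ :=
            norm_add_le _ _
          have h2 : (0:ℝ) ≤ ‖a + t.sum‖ := norm_nonneg _
          nlinarith [norm_nonneg a, norm_nonneg t.sum]
        have hS : (‖t.sum‖)^2 ≤ k * Q := by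
          rw [Complex.sq_norm]; exact ih
        have hx : (0:ℝ) ≤ ‖a‖ := norm_nonneg _
        have hy : (0:ℝ) ≤ ‖t.sum‖ := norm_nonneg _
        have hQ : Complex.normSq a = (‖a‖)^2 := (Complex.sq_norm a).symm
        have hk0 : (0:ℝ) < k := lt_of_lt_of_le zero_lt_one hk
        have key : (‖a‖ + ‖t.sum‖)^2 ≤ (k+1) * (Complex.normSq a + Q) := by
          rw [hQ]
          have e1 : (1+k) * (‖t.sum‖^2) ≤ (1+k)*(k*Q) :=
            mul_le_mul_of_nonneg_left hS (by positivity)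
          have e2 : (0:ℝ) ≤ (k*‖a‖ - ‖t.sum‖)^2 := sq_nonneg _
          have e3 : k * ((‖a‖ + ‖t.sum‖)^2)
              ≤ k * ((k+1)*((‖a‖)^2 + Q)) := by nlinarith [e1, e2]
          exact le_of_mul_le_mul_left e3 hk0
        have : Complex.normSq (a + t.sum) ≤ (k+1) * (Complex.normSq a + Q) :=
          le_trans habs key
        convert this using 2
        push_cast
        ring


lemma rel_multiset_sum (rel : ℝ → Prop)
    (hadd : ∀ x y : ℝ, rel x → rel y → rel (x + y))
    (T : Multiset ℝ) (hT : T ≠ 0) (h : ∀ x ∈ T, rel x) :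
    rel T.sum := by
  induction T using Multiset.induction with
  | empty => exact absurd rfl hT
  | cons a t ih =>
      rcases eq_or_ne t 0 with rfl | ht
      · simpa using h a (by simp)
      · rw [Multiset.sum_cons]
        exact hadd _ _ (h a (by simp)) (ih ht (fun x hx => h x (by simp [hx])))

lemma jensen (rel : ℝ → Prop)
    (hmono : ∀ x y : ℝ, y ≤ x → rel x → rel y)
    (hadd : ∀ x y : ℝ, rel x → rel y → rel (x + y))
    (hscale : ∀ (x c : ℝ), 0 < c → rel x → rel (c * x))
    (A c : ℝ) (μ : ℂ) (hA : 0 ≤ A) (T : Multiset ℂ) (hT : T ≠ 0)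
    (h : ∀ t ∈ T, rel (A * Complex.normSq t + (μ * t).re + c)) :
    rel (A * Complex.normSq (T.sum / (Multiset.card T : ℂ))
      + (μ * (T.sum / (Multiset.card T : ℂ))).re + c) := by
  set m : ℕ := Multiset.card T with hm
  have hm1 : 1 ≤ m := by
    rw [hm, Nat.one_le_iff_ne_zero, Ne, Multiset.card_eq_zero]; exact hT
  have hmR : (0:ℝ) < (m : ℝ) := by exact_mod_cast hm1
  set s : ℂ := T.sum with hs
  have hV : (T.map (fun t => A * Complex.normSq t + (μ * t).re + c)).sum
      = A * (T.map Complex.normSq).sum + (μ * s).re + (m : ℝ) * c := by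
    rw [Multiset.sum_map_add, Multiset.sum_map_add]
    congr 1
    · congr 1
      · exact Multiset.sum_map_mul_left
      · have h1 : (T.map (fun t => (μ * t).re)).sum
            = ((T.map (fun t => μ * t)).map Complex.re).sum := by
          rw [Multiset.map_map]; rfl
        have h2 : ((T.map (fun t => μ * t)).map Complex.re).sum
            = Complex.re ((T.map (fun t => μ * t)).sum) :=
          (map_multiset_sum Complex.reAddGroupHom _).symm
        rw [h1, h2, Multiset.sum_map_mul_left, Multiset.map_id']
    · simp [Multiset.map_const', Multiset.sum_replicate, nsmul_eq_mul]
      exact Or.inl hm.symm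
  have hrelV : rel ((T.map (fun t => A * Complex.normSq t + (μ * t).re + c)).sum) := by
    apply rel_multiset_sum rel hadd
    · simp only [Ne, Multiset.map_eq_zero]; exact hT
    · intro x hx
      rw [Multiset.mem_map] at hx
      obtain ⟨t, ht, rfl⟩ := hx
      exact h t ht
  rw [hV] at hrelV
  have hrelV2 : rel ((1/(m:ℝ)) * (A * (T.map Complex.normSq).sum + (μ * s).re + (m : ℝ) * c)) :=
    hscale _ _ (by positivity) hrelV
  apply hmono _ _ _ hrelV2
  have hcast : ((m:ℕ):ℂ) = ((m:ℝ):ℂ) := by push_cast; rfl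
  have hre : (μ * (s / (m:ℂ))).re = (μ * s).re / (m:ℝ) := by
    rw [← mul_div_assoc, hcast, Complex.div_ofReal_re]
  have hns : Complex.normSq (s / (m:ℂ)) = Complex.normSq s / ((m:ℝ)*(m:ℝ)) := by
    rw [Complex.normSq_div, hcast, Complex.normSq_ofReal]
  rw [hre, hns]
  have hCS : Complex.normSq s ≤ (m : ℝ) * ((T.map Complex.normSq).sum) := normSq_sum_le T
  have key : A * (Complex.normSq s / ((m:ℝ)*(m:ℝ))) ≤ (1/(m:ℝ)) * (A * (T.map Complex.normSq).sum) := by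
    rw [div_eq_mul_inv, one_div]
    have h3 : Complex.normSq s * ((m:ℝ)*(m:ℝ))⁻¹ ≤ ((T.map Complex.normSq).sum) * (m:ℝ)⁻¹ := by
      have h4 := mul_le_mul_of_nonneg_right hCS (by positivity : (0:ℝ) ≤ ((m:ℝ)*(m:ℝ))⁻¹)
      calc Complex.normSq s * ((m:ℝ)*(m:ℝ))⁻¹
          ≤ ((m:ℝ) * (T.map Complex.normSq).sum) * ((m:ℝ)*(m:ℝ))⁻¹ := h4
        _ = ((T.map Complex.normSq).sum) * (m:ℝ)⁻¹ := by
            field_simp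
    calc A * (Complex.normSq s * ((m:ℝ)*(m:ℝ))⁻¹)
        ≤ A * (((T.map Complex.normSq).sum) * (m:ℝ)⁻¹) :=
          mul_le_mul_of_nonneg_left h3 hA
      _ = (m:ℝ)⁻¹ * (A * ((T.map Complex.normSq).sum)) := by ring
  have : (μ*s).re / (m:ℝ) = (1/(m:ℝ)) * (μ*s).re := by ring
  rw [this]
  have hc : c = (1/(m:ℝ)) * ((m:ℝ) * c) := by field_simp
  calc A * (Complex.normSq s / ((m:ℝ)*(m:ℝ))) + (1/(m:ℝ)) * (μ*s).re + c
      ≤ (1/(m:ℝ)) * (A * (T.map Complex.normSq).sum) + (1/(m:ℝ)) * (μ*s).re + (1/(m:ℝ)) * ((m:ℝ)*c) := by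
        rw [← hc]; linarith [key]
    _ = (1/(m:ℝ)) * (A * (T.map Complex.normSq).sum + (μ * s).re + (m : ℝ) * c) := by ring


set_option maxHeartbeats 1000000 in
lemma transfer (α γ : ℝ) (β : ℂ) (z₀ z : ℂ) (h : z₀ ≠ z) :
    phi α γ β z₀ * Complex.normSq ((z₀ - z)⁻¹)
      + ((-(2*(α:ℂ)*z₀ + β)) * (z₀ - z)⁻¹).re + α
    = Complex.normSq ((z₀ - z)⁻¹) * phi α γ β z := by
  have hu : z₀ - z ≠ 0 := sub_ne_zero.mpr h
  have hns : Complex.normSq (z₀ - z) ≠ 0 := by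
    simpa [Complex.normSq_eq_zero] using hu
  have hns' : (z₀.re - z.re) * (z₀.re - z.re) + (z₀.im - z.im) * (z₀.im - z.im) ≠ 0 := by
    simpa [Complex.normSq_apply, Complex.sub_re, Complex.sub_im] using hns
  simp only [phi, Complex.normSq_apply, Complex.inv_re, Complex.inv_im, Complex.normSq_apply,
    Complex.mul_re, Complex.mul_im, Complex.sub_re, Complex.sub_im, Complex.add_re,
    Complex.add_im, Complex.neg_re, Complex.neg_im, Complex.conj_re, Complex.conj_im,
    Complex.ofReal_re, Complex.ofReal_im, Complex.re_ofNat, Complex.im_ofNat]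
  field_simp
  have h2 : (z₀.re - z.re) ^ 2 + (z₀.im - z.im) ^ 2 ≠ 0 := by simpa [sq] using hns'
  rw [div_add' _ _ _ h2, div_left_inj' h2]
  ring


lemma eval_derivative_prod (s : Multiset ℂ) (z : ℂ) (h : ∀ r ∈ s, z ≠ r) :
    eval z (derivative ((s.map (fun r => X - C r)).prod))
      = eval z ((s.map (fun r => X - C r)).prod) * ((s.map (fun r => (z - r)⁻¹)).sum) := by
  induction s using Multiset.induction with
  | empty => simp
  | cons a t ih =>
      have ha : z - a ≠ 0 := sub_ne_zero.mpr (h a (by simp))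
      have ih' := ih (fun r hr => h r (by simp [hr]))
      rw [Multiset.map_cons, Multiset.prod_cons, derivative_mul, Multiset.map_cons,
        Multiset.sum_cons]
      simp only [derivative_sub, derivative_X, derivative_C, sub_zero, one_mul, eval_add,
        eval_mul, eval_sub, eval_X, eval_C, ih']
      field_simp


lemma eval_polder (m : ℕ) (w x : ℂ) (P : Polynomial ℂ) :
    eval x (polder m w P) = (m : ℂ) * eval x P + (w - x) * eval x (derivative P) := by
  simp only [polder, eval_add, eval_smul, eval_mul, eval_sub, eval_C, eval_X, smul_eq_mul]

lemma laguerre (rel : ℝ → Prop)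
    (hmono : ∀ x y : ℝ, y ≤ x → rel x → rel y)
    (hadd : ∀ x y : ℝ, rel x → rel y → rel (x + y))
    (hscale : ∀ (x c : ℝ), 0 < c → rel x → rel (c * x))
    (hneg : ∀ x : ℝ, ¬ rel x → 0 ≤ x)
    (α γ : ℝ) (β : ℂ)
    (m : ℕ) (hm : 1 ≤ m) (P : Polynomial ℂ) (hP : P ≠ 0) (hdeg : P.natDegree ≤ m)
    (hroots : ∀ z : ℂ, P.IsRoot z → rel (phi α γ β z))
    (hinf : P.natDegree < m → rel α)
    (w : ℂ) (hw : ¬ rel (phi α γ β w)) :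
    polder m w P ≠ 0 ∧ (∀ z : ℂ, (polder m w P).IsRoot z → rel (phi α γ β z)) ∧
      ((polder m w P).natDegree < m - 1 → rel α) := by
  have hm0 : ((m:ℕ):ℂ) ≠ 0 := Nat.cast_ne_zero.mpr (by omega)
  have hPw : eval w P ≠ 0 := fun h => hw (hroots w h)
  -- splits data
  have hsplits : Multiset.card P.roots = P.natDegree :=
    (Polynomial.splits_iff_card_roots).mp (IsAlgClosed.splits P)
  have hPfac : C P.leadingCoeff * (P.roots.map (fun r => X - C r)).prod = P :=
    Polynomial.C_leadingCoeff_mul_prod_multiset_X_sub_C hsplits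
  refine ⟨?_, ?_, ?_⟩
  · -- polder ≠ 0
    intro h0
    have : eval w (polder m w P) = 0 := by rw [h0]; simp
    rw [eval_polder] at this
    simp only [sub_self, zero_mul, add_zero] at this
    exact hPw (by
      rcases mul_eq_zero.mp this with h | h
      · exact absurd h hm0
      · exact h)
  · -- roots of polder in D
    intro z₀ hz₀root
    by_contra hz₀
    have hA : (0:ℝ) ≤ phi α γ β z₀ := hneg _ hz₀
    have hPz₀ : eval z₀ P ≠ 0 := fun h => hz₀ (hroots z₀ h)
    have heq : (m:ℂ) * eval z₀ P + (w - z₀) * eval z₀ (derivative P) = 0 := by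
      rw [← eval_polder]; exact hz₀root
    have hne : ∀ r ∈ P.roots, z₀ ≠ r := by
      intro r hr hzr
      exact hPz₀ (by rw [hzr]; exact (Polynomial.mem_roots'.mp hr).2)
    -- logarithmic derivative
    set σ : ℂ := (P.roots.map (fun r => (z₀ - r)⁻¹)).sum with hσ
    have hder : eval z₀ (derivative P) = eval z₀ P * σ := by
      conv_lhs => rw [← hPfac]
      rw [derivative_C_mul, eval_mul, eval_C, eval_derivative_prod _ _ hne]
      conv_rhs => rw [← hPfac]
      rw [eval_mul, eval_C]
      ring
    rw [hder] at heq
    have heq2 : (m:ℂ) + (w - z₀) * σ = 0 := by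
      apply mul_left_cancel₀ hPz₀
      rw [mul_zero]
      linear_combination heq
    have hwz : z₀ ≠ w := by
      intro h
      rw [← h, sub_self, zero_mul, add_zero] at heq2
      exact hm0 heq2
    have hσ0 : σ ≠ 0 := by
      intro h
      rw [h, mul_zero, add_zero] at heq2
      exact hm0 heq2
    -- the multiset
    set k : ℕ := P.natDegree with hk
    set T : Multiset ℂ := Multiset.replicate (m - k) 0 + P.roots.map (fun r => (z₀ - r)⁻¹)
      with hT
    have hcardT : Multiset.card T = m := by
      rw [hT, Multiset.card_add, Multiset.card_replicate, Multiset.card_map, hsplits]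
      omega
    have hsumT : T.sum = σ := by
      rw [hT, Multiset.sum_add, Multiset.sum_replicate, smul_zero, zero_add, hσ]
    have hT0 : T ≠ 0 := by
      intro h
      rw [h] at hcardT
      simp at hcardT
      omega
    set μ : ℂ := -(2*(α:ℂ)*z₀ + β) with hμ
    have hmem : ∀ t ∈ T, rel (phi α γ β z₀ * Complex.normSq t + (μ * t).re + α) := by
      intro t ht
      rw [hT, Multiset.mem_add] at ht
      rcases ht with ht | ht
      · have ht0 : t = 0 := Multiset.eq_of_mem_replicate ht
        have hkm : k < m := by
          by_contra hkm
          have : m - k = 0 := by omega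
          rw [this] at ht
          simp [Multiset.replicate_zero] at ht
        have hrelα : rel α := hinf hkm
        rw [ht0]
        simpa using hrelα
      · rw [Multiset.mem_map] at ht
        obtain ⟨r, hr, rfl⟩ := ht
        have hrel : rel (phi α γ β r) := hroots r (Polynomial.mem_roots'.mp hr).2
        have hzr : z₀ ≠ r := hne r hr
        rw [transfer α γ β z₀ r hzr]
        have hpos : 0 < Complex.normSq ((z₀ - r)⁻¹) := by
          apply Complex.normSq_pos.mpr
          exact inv_ne_zero (sub_ne_zero.mpr hzr)
        exact hscale _ _ hpos hrel
    have hjen := jensen rel hmono hadd hscale (phi α γ β z₀) α μ hA T hT0 hmem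
    rw [hsumT, hcardT] at hjen
    -- σ / m = (z₀ - w)⁻¹
    have havg : σ / (m:ℂ) = (z₀ - w)⁻¹ := by
      rw [eq_comm, inv_eq_iff_eq_inv, eq_comm, inv_div]
      rw [div_eq_iff hσ0]
      have : (z₀ - w) * σ = (m:ℂ) := by
        have : (w - z₀) * σ = -(m:ℂ) := by linear_combination heq2
        linear_combination -this
      rw [this]
    rw [havg] at hjen
    rw [transfer α γ β z₀ w hwz] at hjen
    have hpos : 0 < Complex.normSq ((z₀ - w)⁻¹) := by
      apply Complex.normSq_pos.mpr
      exact inv_ne_zero (sub_ne_zero.mpr hwz)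
    have := hscale _ _ (by positivity : (0:ℝ) < (Complex.normSq ((z₀ - w)⁻¹))⁻¹) hjen
    rw [← mul_assoc, inv_mul_cancel₀ (ne_of_gt hpos), one_mul] at this
    exact hw this
  · -- degree drop
    intro hdrop
    by_contra hα
    have hk : P.natDegree = m := by
      rcases Nat.lt_or_ge P.natDegree m with h | h
      · exact absurd (hinf h) hα
      · omega
    have hm2 : 2 ≤ m := by
      by_contra h
      have : m = 1 := by omega
      rw [this] at hdrop
      omega
    have hco : (polder m w P).coeff (m-1) = 0 :=
      coeff_eq_zero_of_natDegree_lt hdrop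
    rw [polder_coeff] at hco
    have hm1 : m - 1 + 1 = m := by omega
    rw [hm1] at hco
    have hcast : ((m-1 : ℕ) : ℂ) = (m : ℂ) - 1 := by
      push_cast [Nat.cast_sub (by omega : 1 ≤ m)]
      ring
    rw [hcast] at hco
    have hlc : P.coeff m ≠ 0 := by
      rw [← hk]
      exact leadingCoeff_ne_zero.mpr hP
    -- Vieta
    have hvieta : P.coeff (m-1) = P.leadingCoeff * (- P.roots.sum) := by
      conv_lhs => rw [← hPfac]
      rw [coeff_C_mul]
      congr 1
      have hcard : 0 < Multiset.card P.roots := by rw [hsplits, hk]; omega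
      have := Polynomial.multiset_prod_X_sub_C_coeff_card_pred P.roots hcard
      rw [hsplits, hk] at this
      rw [this]
    have hlc' : P.leadingCoeff = P.coeff m := by rw [← hk]; rfl
    rw [hvieta, hlc'] at hco
    -- w = roots.sum / m
    have hcm : ((m-1:ℕ):ℂ) + 1 = (m:ℂ) := by rw [hcast]; ring
    have hw' : w = P.roots.sum / (m:ℂ) := by
      rw [eq_div_iff hm0]
      have h2 : P.coeff m * (w * (m:ℂ) - P.roots.sum) = 0 := by
        linear_combination hco
      rcases mul_eq_zero.mp h2 with h | h
      · exact absurd h hlc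
      · linear_combination h
    have hT0 : P.roots ≠ 0 := by
      intro h
      rw [h] at hsplits
      simp [hk] at hsplits
      omega
    have hjen := jensen rel hmono hadd hscale α γ ((starRingEnd ℂ) β) (hneg α hα)
      P.roots hT0 ?_
    · rw [hsplits, hk] at hjen
      rw [← hw'] at hjen
      exact hw hjen
    · intro t ht
      have := hroots t (Polynomial.mem_roots'.mp ht).2
      simpa [phi] using this


lemma grace (rel : ℝ → Prop)
    (hmono : ∀ x y : ℝ, y ≤ x → rel x → rel y)
    (hadd : ∀ x y : ℝ, rel x → rel y → rel (x + y))
    (hscale : ∀ (x c : ℝ), 0 < c → rel x → rel (c * x))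
    (hneg : ∀ x : ℝ, ¬ rel x → 0 ≤ x)
    (α γ : ℝ) (β : ℂ) :
    ∀ (s : Multiset ℂ) (P : Polynomial ℂ), P ≠ 0 → P.natDegree ≤ Multiset.card s →
    (∀ z : ℂ, P.IsRoot z → rel (phi α γ β z)) →
    (P.natDegree < Multiset.card s → rel α) →
    (∀ w ∈ s, ¬ rel (phi α γ β w)) →
    apol (Multiset.card s) P ((s.map fun r => X - C r).prod) ≠ 0 := by
  intro s
  induction s using Multiset.induction with
  | empty =>
      intro P hP hdeg _ _ _
      simp only [Multiset.card_zero, Multiset.map_zero, Multiset.prod_zero]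
      have : apol 0 P 1 = P.coeff 0 := by
        simp [apol]
      rw [this]
      intro h0
      apply hP
      have := Polynomial.eq_C_of_natDegree_le_zero (by simpa using hdeg)
      rw [this, h0, map_zero]
  | cons a t ih =>
      intro P hP hdeg hroots hinf hmem
      rw [Multiset.card_cons] at hdeg hinf
      rw [Multiset.card_cons, Multiset.map_cons, Multiset.prod_cons]
      set m : ℕ := Multiset.card t + 1 with hm
      set R : Polynomial ℂ := (t.map fun r => X - C r).prod with hR
      have hRmonic : R.Monic := by
        exact monic_multiset_prod_of_monic _ _ (fun r _ => monic_X_sub_C r)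
      have hRdeg : R.natDegree = Multiset.card t := by
        rw [hR, natDegree_multiset_prod_of_monic]
        · rw [Multiset.map_map]
          have : (t.map fun r => ((X : Polynomial ℂ) - C r).natDegree) = t.map (fun _ => 1) := by
            apply Multiset.map_congr rfl
            intro x _
            exact natDegree_X_sub_C x
          rw [Function.comp_def, this]
          simp [Multiset.map_const', Multiset.sum_replicate]
        · intro f hf
          rw [Multiset.mem_map] at hf
          obtain ⟨x, _, rfl⟩ := hf
          exact monic_X_sub_C x
      have hm1 : 1 ≤ m := by omega
      have hstep := apol_step m hm1 P R (by omega) a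
      have hlag := laguerre rel hmono hadd hscale hneg α γ β m hm1 P hP (by omega) hroots
        (by intro h; exact hinf (by omega)) a (hmem a (by simp))
      have hih := ih (polder m a P) hlag.1
        (by have := polder_natDegree_le m a P (by omega); omega)
        hlag.2.1
        (by intro h; exact hlag.2.2 (by omega))
        (fun w hw => hmem w (by simp [hw]))
      intro h0
      apply hih
      have : m - 1 = Multiset.card t := by omega
      rw [← this, hstep, h0, mul_zero]


lemma master (rel : ℝ → Prop)
    (hmono : ∀ x y : ℝ, y ≤ x → rel x → rel y)
    (hadd : ∀ x y : ℝ, rel x → rel y → rel (x + y))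
    (hscale : ∀ (x c : ℝ), 0 < c → rel x → rel (c * x))
    (hneg : ∀ x : ℝ, ¬ rel x → 0 ≤ x)
    (α γ : ℝ) (β : ℂ) (D : Set ℂ) (hDdef : D = {z : ℂ | rel (phi α γ β z)})
    (d : ℕ) (hd : 1 ≤ d) (q : Polynomial ℂ) (hq : q.Monic) (hqd : q.natDegree = d)
    (n : ℕ) (hn : 1 ≤ n)
    (f : Polynomial ℂ) (hf : f.natDegree = n)
    (hroots : ∀ z : ℂ, f.IsRoot z → z ∈ innerImage q D)
    (u : Fin n → ℂ) (hu : ∀ k : Fin n, u k ∉ (fun w => q.eval w) '' D) :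
    Sfun q n f u ≠ 0 := by
  have hqne : q ≠ 0 := hq.ne_zero
  set P : Polynomial ℂ := f.comp q with hP
  set Q : Polynomial ℂ := ∏ j, (q - Polynomial.C (u j)) with hQ
  have hPdeg : P.natDegree = n * d := by
    rw [hP, natDegree_comp, hf, hqd]
  have hPne : P ≠ 0 := by
    intro h
    rw [h, natDegree_zero] at hPdeg
    have : 1 ≤ n * d := Nat.one_le_iff_ne_zero.mpr (by positivity)
    omega
  have hProots : ∀ z : ℂ, P.IsRoot z → rel (phi α γ β z) := by
    intro z hz
    have : f.IsRoot (q.eval z) := by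
      rwa [IsRoot, ← eval_comp]
    have hmem := hroots _ this z rfl
    rwa [hDdef] at hmem
  -- factors monic
  have hfac : ∀ j : Fin n, (q - Polynomial.C (u j)).Monic := by
    intro j
    apply hq.sub_of_left
    apply lt_of_le_of_lt degree_C_le
    rw [degree_eq_natDegree hqne, hqd]
    exact_mod_cast Nat.pos_of_ne_zero (by omega)
  have hQmonic : Q.Monic := monic_prod_of_monic _ _ (fun j _ => hfac j)
  have hQne : Q ≠ 0 := hQmonic.ne_zero
  have hQdeg : Q.natDegree = n * d := by
    rw [hQ, natDegree_prod _ _ (fun j _ => (hfac j).ne_zero)]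
    have : ∀ j ∈ (Finset.univ : Finset (Fin n)), (q - Polynomial.C (u j)).natDegree = d := by
      intro j _
      rw [natDegree_sub_C, hqd]
    rw [Finset.sum_congr rfl this, Finset.sum_const, Finset.card_univ, Fintype.card_fin,
      smul_eq_mul]
  have hscard : Multiset.card Q.roots = n * d := by
    rw [Polynomial.splits_iff_card_roots.mp (IsAlgClosed.splits Q), hQdeg]
  have hQfac : Q = (Q.roots.map fun r => X - C r).prod :=
    (IsAlgClosed.splits Q).eq_prod_roots_of_monic hQmonic
  have hQroots : ∀ w ∈ Q.roots, ¬ rel (phi α γ β w) := by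
    intro w hw hrel
    have hwroot : Q.IsRoot w := (Polynomial.mem_roots'.mp hw).2
    rw [hQ, IsRoot, eval_prod] at hwroot
    obtain ⟨j, _, hj⟩ := Finset.prod_eq_zero_iff.mp hwroot
    rw [eval_sub, eval_C, sub_eq_zero] at hj
    apply hu j
    exact ⟨w, by rwa [hDdef], hj⟩
  have hg := grace rel hmono hadd hscale hneg α γ β Q.roots P hPne
    (by rw [hscard, hPdeg]) hProots (by rw [hscard, hPdeg]; omega) hQroots
  rw [hscard, ← hQfac] at hg
  unfold Sfun
  rwa [hqd, ← hP, ← hQ]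


end WalshProof

/-- Generalized Walsh theorem, part 1. -/
theorem stmt_10 (D : Set ℂ) (hD : IsCircularDomain D)
    (d : ℕ) (hd : 1 ≤ d) (q : Polynomial ℂ) (hq : q.Monic) (hqd : q.natDegree = d)
    (n : ℕ) (hn : 1 ≤ n)
    (f : Polynomial ℂ) (hf : f.natDegree = n)
    (hroots : ∀ z : ℂ, f.IsRoot z → z ∈ innerImage q D)
    (T : Polynomial ℂ) (hTdeg : T.degree ≤ (n : ℕ))
    (hT : ∀ u : ℂ, T.eval u = apol (n * d) (f.comp q) ((q - Polynomial.C u) ^ n)) :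
    (∀ z : ℂ, T.IsRoot z → z ∈ (fun w => q.eval w) '' D) ∧
    (∀ u : Fin n → ℂ, Sfun q n f u = 0 → ∃ k : Fin n, u k ∈ (fun w => q.eval w) '' D) := by
  
  obtain ⟨α, γ, β, hcase⟩ := hD
  have key : ∀ u : Fin n → ℂ, Sfun q n f u = 0 → ∃ k : Fin n, u k ∈ (fun w => q.eval w) '' D := by
    intro u hSu
    by_contra hno
    push_neg at hno
    rcases hcase with h | h
    · exact master (fun x => x < 0)
        (fun x y hyx hx => lt_of_le_of_lt hyx hx)
        (fun x y hx hy => add_neg hx hy)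
        (fun x c hc hx => mul_neg_of_pos_of_neg hc hx)
        (fun x hx => not_lt.mp hx)
        α γ β D (by rw [h]; rfl) d hd q hq hqd n hn f hf hroots u hno hSu
    · exact master (fun x => x ≤ 0)
        (fun x y hyx hx => le_trans hyx hx)
        (fun x y hx hy => add_nonpos hx hy)
        (fun x c hc hx => mul_nonpos_of_nonneg_of_nonpos hc.le hx)
        (fun x hx => (not_le.mp hx).le)
        α γ β D (by rw [h]; rfl) d hd q hq hqd n hn f hf hroots u hno hSu
  constructor
  · intro z hz
    have hSu : Sfun q n f (fun _ : Fin n => z) = 0 := by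
      unfold Sfun
      rw [hqd]
      rw [Finset.prod_const, Finset.card_univ, Fintype.card_fin]
      rw [← hT z]
      exact hz
    obtain ⟨k, hk⟩ := key (fun _ => z) hSu
    exact hk
  · exact key
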